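/- Let f₁, f₂ : ℝⁿ → ℝ be convex functions and f = f₁ − f₂. Let x* ∈ ℝⁿ be a global minimizer of f with f* = f(x*), let ε̄ ≥ 0, and let x̄ ∈ ℝⁿ satisfy (f(x̄) − f*)/(|f*| + 1) ≤ ε̄ (i.e., x̄ is an ε̄-approximate global minimizer). Then, with ε̂ = ε̄(|f*| + 1), for every ε ≥ 0 one has ∂_ε f₂(x̄) ⊆ ∂_{ε+ε̂} f₁(x̄). -/
import Mathlib

open scoped RealInnerProductSpace

/-- The ε-subdifferential of `g` at `x`. -/
def epsSubdiff {n : ℕ} (g : EuclideanSpace ℝ (Fin n) → ℝ) (ε : ℝ)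
    (x : EuclideanSpace ℝ (Fin n)) : Set (EuclideanSpace ℝ (Fin n)) :=
  {ξ | ∀ y, g y ≥ g x + ⟪ξ, y - x⟫ - ε}

/-- The subdifferential of `g` at `x`. -/
def subdiff {n : ℕ} (g : EuclideanSpace ℝ (Fin n) → ℝ)
    (x : EuclideanSpace ℝ (Fin n)) : Set (EuclideanSpace ℝ (Fin n)) :=
  {ξ | ∀ y, g y ≥ g x + ⟪ξ, y - x⟫}

/-- The t-spherical subdifferential of `g` at `x`. -/
def sphSubdiff {n : ℕ} (g : EuclideanSpace ℝ (Fin n) → ℝ) (t : ℝ)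
    (x : EuclideanSpace ℝ (Fin n)) : Set (EuclideanSpace ℝ (Fin n)) :=
  convexHull ℝ {ξ | ∃ d : EuclideanSpace ℝ (Fin n), ‖d‖ = 1 ∧ ξ ∈ subdiff g (x + t • d)}

theorem eps_subdiff_inclusion_at_approx_global_min {n : ℕ}
    (f₁ f₂ f : EuclideanSpace ℝ (Fin n) → ℝ)
    (h₁ : ConvexOn ℝ Set.univ f₁) (h₂ : ConvexOn ℝ Set.univ f₂)
    (hf : ∀ x, f x = f₁ x - f₂ x)
    (xstar xbar : EuclideanSpace ℝ (Fin n))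
    (hglob : ∀ x, f xstar ≤ f x)
    (fstar : ℝ) (hfstar : fstar = f xstar)
    (εbar : ℝ) (hεbar : 0 ≤ εbar)
    (happrox : (f xbar - fstar) / (|fstar| + 1) ≤ εbar)
    (εhat : ℝ) (hεhat : εhat = εbar * (|fstar| + 1)) :
    ∀ ε : ℝ, 0 ≤ ε → epsSubdiff f₂ ε xbar ⊆ epsSubdiff f₁ (ε + εhat) xbar := by
  intro ε hε ξ hξ y
  have hpos : (0:ℝ) < |fstar| + 1 := by positivity
  have hbar : f xbar - fstar ≤ εhat := by
    rw [hεhat]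
    have := (div_le_iff₀ hpos).mp happrox
    linarith
  have h2 := hξ y
  have hy : fstar ≤ f y := hfstar ▸ hglob y
  have e1 := hf y
  have e2 := hf xbar
  simp only [epsSubdiff, Set.mem_setOf_eq] at *
  linarith
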